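/- For all positive integers n and k with 1 ≤ k ≤ 2^n, v_2(S(2^n, k)) = s_2(k) − 1, where S denotes the Stirling number of the second kind and s_2(k) is the binary digit sum of k. -/

import Mathlib

/-- Stirling numbers of the second kind, via the recurrence
`S(n+1,k+1) = S(n,k) + (k+1) * S(n,k+1)`. -/
def stirling2 : ℕ → ℕ → ℕ
  | 0, 0 => 1
  | 0, _ + 1 => 0
  | _ + 1, 0 => 0
  | n + 1, k + 1 => stirling2 n k + (k + 1) * stirling2 n (k + 1)

/-- Binary digit sum of `k`. -/
def s2 (k : ℕ) : ℕ := (Nat.digits 2 k).sum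

/-- Number of trailing 1-bits of `k`: the least `i` with the `i`-th binary digit of `k` zero. -/
def uBits (k : ℕ) : ℕ :=
  Nat.find (p := fun i => k.testBit i = false)
    ⟨k, Nat.testBit_lt_two_pow (Nat.lt_two_pow_self (n := k))⟩


-- stirling2 basics
@[simp] lemma stirling2_zero_zero : stirling2 0 0 = 1 := rfl
@[simp] lemma stirling2_zero_succ (k : ℕ) : stirling2 0 (k+1) = 0 := rfl
@[simp] lemma stirling2_succ_zero (n : ℕ) : stirling2 (n+1) 0 = 0 := rfl
lemma stirling2_succ (n k : ℕ) :
    stirling2 (n+1) (k+1) = stirling2 n k + (k + 1) * stirling2 n (k+1) := rfl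

lemma stirling2_eq_zero_of_lt : ∀ {n k : ℕ}, n < k → stirling2 n k = 0 := by
  intro n
  induction n with
  | zero => intro k hk; cases k with
    | zero => omega
    | succ k => rfl
  | succ n ih =>
    intro k hk
    cases k with
    | zero => omega
    | succ k =>
      rw [stirling2_succ, ih (by omega), ih (by omega)]; ring

-- s2 basics
@[simp] lemma s2_zero : s2 0 = 0 := by simp [s2]
lemma s2_two_mul (x : ℕ) (hx : x ≠ 0) : s2 (2 * x) = s2 x := by
  unfold s2
  rw [Nat.digits_def' (by norm_num) (by omega)]
  simp [Nat.mul_div_cancel_left, Nat.mul_mod_right]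
lemma s2_two_mul_add_one (x : ℕ) : s2 (2 * x + 1) = s2 x + 1 := by
  unfold s2
  rw [Nat.digits_def' (by norm_num) (by omega)]
  simp [Nat.mul_add_mod, Nat.mul_add_div, Nat.add_comm]
  norm_num [Nat.add_mul_div_left]
lemma s2_one : s2 1 = 1 := by simp [s2]

lemma s2_pos {k : ℕ} (hk : k ≠ 0) : 1 ≤ s2 k := by
  induction k using Nat.strong_induction_on with
  | _ k ih =>
    rcases Nat.even_or_odd k with ⟨x, hx⟩ | ⟨x, hx⟩
    · subst hx
      rw [← two_mul, s2_two_mul x (by omega)]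
      exact ih x (by omega) (by omega)
    · subst hx
      rw [s2_two_mul_add_one]; omega

lemma s2_eq_zero {k : ℕ} (h : s2 k = 0) : k = 0 := by
  by_contra hk; have := s2_pos hk; omega

lemma s2_le_self (k : ℕ) : s2 k ≤ k := by
  induction k using Nat.strong_induction_on with
  | _ k ih =>
    rcases Nat.eq_zero_or_pos k with rfl | hk
    · simp
    rcases Nat.even_or_odd k with ⟨x, hx⟩ | ⟨x, hx⟩
    · subst hx
      rw [← two_mul, s2_two_mul x (by omega)]
      have := ih x (by omega); omega
    · subst hx
      rw [s2_two_mul_add_one]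
      have := ih x (by omega); omega

lemma s2_pow_two (c : ℕ) : s2 (2 ^ c) = 1 := by
  induction c with
  | zero => exact s2_one
  | succ c ih => rw [pow_succ, mul_comm, s2_two_mul _ (by positivity), ih]

lemma s2_eq_one_iff {k : ℕ} (h : s2 k = 1) : ∃ c, k = 2 ^ c := by
  induction k using Nat.strong_induction_on with
  | _ k ih =>
    rcases Nat.eq_zero_or_pos k with rfl | hk
    · simp at h
    rcases Nat.even_or_odd k with ⟨x, hx⟩ | ⟨x, hx⟩
    · subst hx
      rw [← two_mul, s2_two_mul x (by omega)] at h
      obtain ⟨c, hc⟩ := ih x (by omega) h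
      exact ⟨c + 1, by rw [pow_succ, hc]; ring⟩
    · subst hx
      rw [s2_two_mul_add_one] at h
      have hx0 : x = 0 := s2_eq_zero (by omega)
      exact ⟨0, by omega⟩

-- Legendre / Kummer
lemma v2_factorial (k : ℕ) : s2 k + padicValNat 2 (Nat.factorial k) = k := by
  have h := sub_one_mul_padicValNat_factorial (p := 2) k
  have h2 := s2_le_self k
  unfold s2 at *
  omega

lemma v2_choose {j m : ℕ} (h : j ≤ m) :
    s2 j + s2 (m - j) = s2 m + padicValNat 2 (Nat.choose m j) := by
  have key := Nat.choose_mul_factorial_mul_factorial h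
  have hC : Nat.choose m j ≠ 0 := by have := Nat.choose_pos h; omega
  have h1 : padicValNat 2 (Nat.choose m j * Nat.factorial j * Nat.factorial (m - j))
      = padicValNat 2 (Nat.choose m j) + padicValNat 2 (Nat.factorial j)
        + padicValNat 2 (Nat.factorial (m - j)) := by
    rw [padicValNat.mul (by positivity) (Nat.factorial_ne_zero _),
      padicValNat.mul hC (Nat.factorial_ne_zero _)]
  rw [key] at h1
  have l1 := v2_factorial j
  have l2 := v2_factorial (m - j)
  have l3 := v2_factorial m
  omega

lemma dvd_pow_s2_factorial (t : ℕ) : 2 ^ t ∣ 2 ^ (s2 t) * Nat.factorial t := by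
  have h := v2_factorial t
  calc 2 ^ t = 2 ^ (s2 t) * 2 ^ (padicValNat 2 (Nat.factorial t)) := by
        rw [← pow_add, h]
    _ ∣ 2 ^ (s2 t) * Nat.factorial t :=
        mul_dvd_mul_left _ pow_padicValNat_dvd

lemma dvd_pow_s2_choose {j m : ℕ} (h : j ≤ m) :
    2 ^ (s2 j + s2 (m - j)) ∣ 2 ^ (s2 m) * Nat.choose m j := by
  calc 2 ^ (s2 j + s2 (m - j))
      = 2 ^ (s2 m) * 2 ^ (padicValNat 2 (Nat.choose m j)) := by
        rw [← pow_add, v2_choose h]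
    _ ∣ 2 ^ (s2 m) * Nat.choose m j := mul_dvd_mul_left _ pow_padicValNat_dvd

open Finset in
lemma sum_range_two_mul {M : Type*} [AddCommMonoid M] (f : ℕ → M) (l : ℕ) :
    ∑ i ∈ range (2 * l), f i = ∑ j ∈ range l, (f (2 * j) + f (2 * j + 1)) := by
  induction l with
  | zero => simp
  | succ l ih =>
    have h : 2 * (l + 1) = (2 * l + 1) + 1 := by ring
    rw [h, sum_range_succ, sum_range_succ, ih, sum_range_succ]
    rw [add_assoc]

noncomputable def Gs (m k : ℕ) : ℤ :=
  ∑ i ∈ Finset.range (k + 1), (-1) ^ i * (Nat.choose k i : ℤ) * (i : ℤ) ^ m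

noncomputable def Hs (m k : ℕ) : ℤ :=
  ∑ j ∈ Finset.range (k + 1), (-1) ^ j * (Nat.choose k j : ℤ) * ((j : ℤ) + 1) ^ m

open Finset in
lemma Gs_peel (m k : ℕ) :
    Gs m k = (∑ j ∈ range k, (-1 : ℤ) ^ (j + 1) * (Nat.choose k (j + 1) : ℤ) * ((j : ℤ) + 1) ^ m)
      + (0 : ℤ) ^ m := by
  unfold Gs
  rw [Finset.sum_range_succ' (fun i => (-1 : ℤ) ^ i * (Nat.choose k i : ℤ) * (i : ℤ) ^ m) k]
  push_cast
  norm_num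

open Finset in
lemma Hs_eq (m k : ℕ) : Hs m k = Gs m k - Gs m (k + 1) := by
  have step1 : Gs m (k + 1) =
      (∑ j ∈ range (k + 1), (-1 : ℤ) ^ (j + 1) * (Nat.choose (k + 1) (j + 1) : ℤ)
        * ((j : ℤ) + 1) ^ m) + (0 : ℤ) ^ m := Gs_peel m (k + 1)
  have step2 : ∀ j ∈ range (k + 1),
      (-1 : ℤ) ^ (j + 1) * (Nat.choose (k + 1) (j + 1) : ℤ) * ((j : ℤ) + 1) ^ m
      = -((-1 : ℤ) ^ j * (Nat.choose k j : ℤ) * ((j : ℤ) + 1) ^ m)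
        + -((-1 : ℤ) ^ j * (Nat.choose k (j + 1) : ℤ) * ((j : ℤ) + 1) ^ m) := by
    intro j _
    rw [Nat.choose_succ_succ]
    push_cast
    ring
  rw [sum_congr rfl step2, Finset.sum_add_distrib, Finset.sum_neg_distrib,
    Finset.sum_neg_distrib] at step1
  have step3 : ∑ j ∈ range (k + 1), (-1 : ℤ) ^ j * (Nat.choose k (j + 1) : ℤ) * ((j : ℤ) + 1) ^ m
      = -(∑ j ∈ range k, (-1 : ℤ) ^ (j + 1) * (Nat.choose k (j + 1) : ℤ) * ((j : ℤ) + 1) ^ m) := by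
    rw [sum_range_succ, Nat.choose_succ_self]
    have : ∀ j ∈ range k, (-1 : ℤ) ^ j * (Nat.choose k (j + 1) : ℤ) * ((j : ℤ) + 1) ^ m
        = -((-1 : ℤ) ^ (j + 1) * (Nat.choose k (j + 1) : ℤ) * ((j : ℤ) + 1) ^ m) := by
      intro j _; ring
    rw [sum_congr rfl this, Finset.sum_neg_distrib]
    push_cast
    ring
  have step4 := Gs_peel m k
  unfold Hs
  rw [step1, step3, step4]
  ring

open Finset in
lemma Gs_succ_succ (m k : ℕ) : Gs (m + 1) (k + 1) = -((k : ℤ) + 1) * Hs m k := by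
  have step1 := Gs_peel (m + 1) (k + 1)
  have step2 : ∀ j ∈ range (k + 1),
      (-1 : ℤ) ^ (j + 1) * (Nat.choose (k + 1) (j + 1) : ℤ) * ((j : ℤ) + 1) ^ (m + 1)
      = -(((k : ℤ) + 1) * ((-1 : ℤ) ^ j * (Nat.choose k j : ℤ) * ((j : ℤ) + 1) ^ m)) := by
    intro j _
    have h := Nat.add_one_mul_choose_eq k j
    have h' : ((k : ℤ) + 1) * (Nat.choose k j : ℤ)
        = (Nat.choose (k + 1) (j + 1) : ℤ) * ((j : ℤ) + 1) := by
      exact_mod_cast congrArg (fun x : ℕ => (x : ℤ)) h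
    calc (-1 : ℤ) ^ (j + 1) * (Nat.choose (k + 1) (j + 1) : ℤ) * ((j : ℤ) + 1) ^ (m + 1)
        = -((-1 : ℤ) ^ j * ((Nat.choose (k + 1) (j + 1) : ℤ) * ((j : ℤ) + 1))
            * ((j : ℤ) + 1) ^ m) := by ring
      _ = -((-1 : ℤ) ^ j * (((k : ℤ) + 1) * (Nat.choose k j : ℤ)) * ((j : ℤ) + 1) ^ m) := by
          rw [h']
      _ = -(((k : ℤ) + 1) * ((-1 : ℤ) ^ j * (Nat.choose k j : ℤ) * ((j : ℤ) + 1) ^ m)) := by ring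
  rw [sum_congr rfl step2, Finset.sum_neg_distrib, ← Finset.mul_sum] at step1
  rw [step1]
  unfold Hs
  norm_num
  ring

lemma Gs_eq (m : ℕ) : ∀ k, Gs m k = (-1) ^ k * (Nat.factorial k : ℤ) * (stirling2 m k : ℤ) := by
  induction m with
  | zero =>
    intro k
    have h : Gs 0 k = ∑ i ∈ Finset.range (k + 1), (-1 : ℤ) ^ i * (Nat.choose k i : ℤ) := by
      unfold Gs
      refine Finset.sum_congr rfl ?_
      intro i _; rw [pow_zero, mul_one]
    rw [h, Int.alternating_sum_range_choose]
    cases k with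
    | zero => simp
    | succ k => simp [stirling2_eq_zero_of_lt (Nat.zero_lt_succ k)]
  | succ m ih =>
    intro k
    cases k with
    | zero =>
      unfold Gs
      simp
    | succ k =>
      rw [Gs_succ_succ, Hs_eq, ih k, ih (k + 1), stirling2_succ]
      push_cast [Nat.factorial_succ]
      ring

lemma mul_choose_key (j t : ℕ) :
    j * Nat.choose j t = (t + 1) * Nat.choose j (t + 1) + t * Nat.choose j t := by
  rcases le_or_gt t j with h | h
  · have key := Nat.choose_succ_right_eq j t
    have : j = (j - t) + t := by omega
    calc j * Nat.choose j t = ((j - t) + t) * Nat.choose j t := by rw [← this]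
      _ = (j - t) * Nat.choose j t + t * Nat.choose j t := by rw [Nat.add_mul]
      _ = (t + 1) * Nat.choose j (t + 1) + t * Nat.choose j t := by
          rw [mul_comm (j - t), ← key, mul_comm]
  · rw [Nat.choose_eq_zero_of_lt h, Nat.choose_eq_zero_of_lt (by omega)]
    ring

open Finset in
lemma pow_eq_sum_stirling (m : ℕ) : ∀ j : ℕ,
    j ^ m = ∑ t ∈ range (m + 1), stirling2 m t * Nat.factorial t * Nat.choose j t := by
  induction m with
  | zero => intro j; simp
  | succ m ih =>
    intro j
    have lhs : j ^ (m + 1)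
        = ∑ t ∈ range (m + 1), stirling2 m t * Nat.factorial t * (j * Nat.choose j t) := by
      rw [pow_succ, ih j, Finset.sum_mul]
      refine sum_congr rfl ?_
      intro t _; ring
    rw [lhs]
    have expand : ∀ t ∈ range (m + 1),
        stirling2 m t * Nat.factorial t * (j * Nat.choose j t)
        = stirling2 m t * Nat.factorial t * ((t+1) * Nat.choose j (t+1))
          + stirling2 m t * Nat.factorial t * (t * Nat.choose j t) := by
      intro t _; rw [mul_choose_key j t]; ring
    rw [sum_congr rfl expand, Finset.sum_add_distrib]
    -- second sum: reindex
    have second : ∑ t ∈ range (m + 1), stirling2 m t * Nat.factorial t * (t * Nat.choose j t)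
        = ∑ t ∈ range (m + 1),
            stirling2 m (t+1) * ((t + 1) * Nat.factorial (t+1)) * Nat.choose j (t+1)
          - stirling2 m (m+1) * ((m + 1) * Nat.factorial (m+1)) * Nat.choose j (m+1) := by
      rw [Finset.sum_range_succ'
        (fun t => stirling2 m t * Nat.factorial t * (t * Nat.choose j t)) m]
      rw [Finset.sum_range_succ
        (fun t => stirling2 m (t+1) * ((t + 1) * Nat.factorial (t+1)) * Nat.choose j (t+1)) m]
      have : ∀ t ∈ range m, stirling2 m (t+1) * Nat.factorial (t+1) * ((t+1) * Nat.choose j (t+1))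
          = stirling2 m (t+1) * ((t + 1) * Nat.factorial (t+1)) * Nat.choose j (t+1) := by
        intro t _; ring
      rw [sum_congr rfl this]
      simp
    rw [second, stirling2_eq_zero_of_lt (Nat.lt_succ_self m)]
    simp only [Nat.zero_mul, Nat.mul_zero, Nat.zero_mul, Nat.sub_zero]
    -- target: peel 0th
    rw [Finset.sum_range_succ'
      (fun t => stirling2 (m+1) t * Nat.factorial t * Nat.choose j t) (m+1)]
    simp only [stirling2_succ_zero, Nat.zero_mul, Nat.mul_zero, Nat.add_zero, Nat.zero_mul]
    rw [← Finset.sum_add_distrib]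
    refine (sum_congr rfl ?_).symm
    intro t _
    rw [stirling2_succ m t, Nat.factorial_succ]
    ring

open Finset

def Lf (k t : ℕ) : ℕ := ∑ j ∈ range (k + 1), Nat.choose k (2 * j + 1) * Nat.choose j t
def Ef (k t : ℕ) : ℕ := ∑ j ∈ range (k + 1), Nat.choose k (2 * j) * Nat.choose j t

lemma Lf_succ (k t : ℕ) : Lf (k + 1) t = Lf k t + Ef k t := by
  unfold Lf Ef
  rw [sum_range_succ (fun j => Nat.choose (k+1) (2 * j + 1) * Nat.choose j t) (k+1)]
  rw [Nat.choose_eq_zero_of_lt (by omega), Nat.zero_mul, Nat.add_zero]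
  rw [← Finset.sum_add_distrib]
  refine sum_congr rfl ?_
  intro j _
  rw [Nat.choose_succ_succ k (2 * j)]
  ring

lemma Ef_succ (k t : ℕ) : Ef (k + 1) (t + 1) = Ef k (t + 1) + Lf k (t + 1) + Lf k t := by
  have peel : Ef (k+1) (t+1)
      = ∑ j ∈ range (k + 1), Nat.choose (k+1) (2 * (j+1)) * Nat.choose (j+1) (t+1) := by
    unfold Ef
    rw [Finset.sum_range_succ' (fun j => Nat.choose (k+1) (2 * j) * Nat.choose j (t+1)) (k+1)]
    simp
  have expand : ∀ j ∈ range (k + 1),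
      Nat.choose (k+1) (2 * (j+1)) * Nat.choose (j+1) (t+1)
      = Nat.choose k (2*j+1) * Nat.choose j t + Nat.choose k (2*j+1) * Nat.choose j (t+1)
        + Nat.choose k (2*(j+1)) * Nat.choose (j+1) (t+1) := by
    intro j _
    rw [show 2 * (j + 1) = (2 * j + 1) + 1 from by ring,
      Nat.choose_succ_succ k (2 * j + 1), Nat.choose_succ_succ j t]
    ring
  have reindex : ∑ j ∈ range (k + 1), Nat.choose k (2*(j+1)) * Nat.choose (j+1) (t+1)
      = Ef k (t+1) := by
    have h := Finset.sum_range_succ' (fun j => Nat.choose k (2 * j) * Nat.choose j (t+1)) (k+1)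
    have htop := Finset.sum_range_succ (fun j => Nat.choose k (2 * j) * Nat.choose j (t+1)) (k+1)
    unfold Ef
    rw [htop] at h
    rw [Nat.choose_eq_zero_of_lt (show k < 2*(k+1) by omega)] at h
    simpa using h.symm
  rw [peel, sum_congr rfl expand, Finset.sum_add_distrib, Finset.sum_add_distrib, reindex]
  unfold Lf
  ring

lemma Lf_two_step (k t : ℕ) : Lf (k + 2) (t + 1) = 2 * Lf (k + 1) (t + 1) + Lf k t := by
  have h1 : Lf (k + 2) (t + 1) = Lf (k+1) (t+1) + Ef (k+1) (t+1) := Lf_succ (k+1) (t+1)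
  have h2 := Ef_succ k t
  have h3 := Lf_succ k (t + 1)
  omega

lemma Lf_vanish {k t : ℕ} (h : k < 2 * t + 1) : Lf k t = 0 := by
  unfold Lf
  refine Finset.sum_eq_zero ?_
  intro j _
  rcases le_or_gt t j with hj | hj
  · rw [Nat.choose_eq_zero_of_lt (show k < 2*j+1 by omega), Nat.zero_mul]
  · rw [Nat.choose_eq_zero_of_lt hj, Nat.mul_zero]

lemma Lf_t_zero (k : ℕ) : Lf (k + 1) 0 = 2 ^ k := by
  have h1 := Lf_succ k 0
  have h2 : Lf k 0 + Ef k 0 = ∑ i ∈ range (2 * (k + 1)), Nat.choose k i := by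
    rw [sum_range_two_mul (fun i => Nat.choose k i) (k+1)]
    unfold Lf Ef
    rw [← Finset.sum_add_distrib]
    refine sum_congr rfl ?_
    intro j _
    simp [Nat.choose_zero_right]
    ring
  have h3 : ∑ i ∈ range (2 * (k + 1)), Nat.choose k i
      = ∑ i ∈ range (k + 1), Nat.choose k i := by
    symm
    refine Finset.sum_subset (by intro x hx; simp at *; omega) ?_
    intro x _ hx
    simp at hx
    exact Nat.choose_eq_zero_of_lt (by omega)
  rw [h1, h2, h3, Nat.sum_range_choose]

lemma Lf_closed : ∀ t r, Lf (2 * t + 1 + r) t = 2 ^ r * Nat.choose (t + r) t := by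
  intro t
  induction t with
  | zero =>
    intro r
    have : 2 * 0 + 1 + r = r + 1 := by omega
    rw [this, Lf_t_zero]
    simp
  | succ t iht =>
    intro r
    induction r with
    | zero =>
      rw [show 2 * (t+1) + 1 + 0 = (2*t+1) + 2 by ring, Lf_two_step]
      rw [Lf_vanish (show 2*t+1+1 < 2*(t+1)+1 by omega)]
      have := iht 0
      rw [show 2*t+1+0 = 2*t+1 by ring] at this
      rw [this]
      simp
    | succ r ihr =>
      rw [show 2 * (t+1) + 1 + (r+1) = (2*t+r+2) + 2 by ring, Lf_two_step]
      rw [show 2*t+r+2+1 = 2*(t+1)+1+r by ring, ihr]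
      rw [show 2*t+r+2 = 2*t+1+(r+1) by ring, iht (r+1)]
      rw [show t+1+(r+1) = (t+r+1)+1 by omega, Nat.choose_succ_succ (t+r+1) t]
      rw [show t+1+r = t+r+1 by omega]
      ring_nf
      rw [Nat.succ_eq_one_add]
      ring_nf

def Xs (k m : ℕ) : ℕ := ∑ j ∈ range (k + 1), Nat.choose k (2 * j + 1) * (2 * j + 1) ^ m

lemma Xs_eq (k m : ℕ) : Xs k m
    = ∑ m' ∈ range (m + 1), ∑ t ∈ range (m' + 1),
        2 ^ m' * Nat.choose m m' * (stirling2 m' t * Nat.factorial t * Lf k t) := by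
  calc Xs k m
      = ∑ j ∈ range (k + 1), ∑ m' ∈ range (m + 1),
          Nat.choose k (2 * j + 1) * ((2 * j) ^ m' * Nat.choose m m') := by
        refine sum_congr rfl ?_
        intro j _
        have hp := add_pow (2 * j) 1 m
        simp only [one_pow, mul_one, Nat.cast_id] at hp
        rw [hp, Finset.mul_sum]
    _ = ∑ m' ∈ range (m + 1), ∑ j ∈ range (k + 1),
          Nat.choose k (2 * j + 1) * ((2 * j) ^ m' * Nat.choose m m') := Finset.sum_comm
    _ = ∑ m' ∈ range (m + 1), ∑ j ∈ range (k + 1), ∑ t ∈ range (m' + 1),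
          2 ^ m' * Nat.choose m m'
            * (stirling2 m' t * Nat.factorial t * (Nat.choose k (2 * j + 1) * Nat.choose j t)) := by
        refine sum_congr rfl ?_
        intro m' _
        refine sum_congr rfl ?_
        intro j _
        rw [mul_pow, pow_eq_sum_stirling m' j]
        simp only [Finset.mul_sum, Finset.sum_mul]
        refine sum_congr rfl ?_
        intro t _
        ring
    _ = ∑ m' ∈ range (m + 1), ∑ t ∈ range (m' + 1),
          2 ^ m' * Nat.choose m m' * (stirling2 m' t * Nat.factorial t * Lf k t) := by
        refine sum_congr rfl ?_
        intro m' _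
        rw [Finset.sum_comm]
        refine sum_congr rfl ?_
        intro t _
        unfold Lf
        simp only [Finset.mul_sum]

def Rest (k m : ℕ) : ℕ := ∑ a ∈ range m, ∑ t ∈ range (a + 2),
  2 ^ (a + 1) * Nat.choose m (a + 1) * (stirling2 (a + 1) t * Nat.factorial t * Lf k t)

lemma Xs_decomp (K m : ℕ) : Xs (K + 1) m = 2 ^ K + Rest (K + 1) m := by
  rw [Xs_eq]
  rw [Finset.sum_range_succ' (fun m' => ∑ t ∈ range (m' + 1),
    2 ^ m' * Nat.choose m m' * (stirling2 m' t * Nat.factorial t * Lf (K + 1) t)) m]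
  have h0 : ∑ t ∈ range 1,
      2 ^ 0 * Nat.choose m 0 * (stirling2 0 t * Nat.factorial t * Lf (K + 1) t) = 2 ^ K := by
    rw [Finset.sum_range_one]
    simp [Lf_t_zero]
  rw [h0]
  rw [Nat.add_comm]
  rfl

def Evs (k m : ℕ) : ℕ := ∑ j ∈ range (k + 1), Nat.choose k (2 * j) * (2 * j) ^ m

lemma Gs_split (m k : ℕ) : Gs m k = (Evs k m : ℤ) - (Xs k m : ℤ) := by
  have ext : Gs m k = ∑ i ∈ range (2 * (k + 1)),
      (-1 : ℤ) ^ i * (Nat.choose k i : ℤ) * (i : ℤ) ^ m := by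
    unfold Gs
    refine Finset.sum_subset ?_ ?_
    · intro x hx; simp at *; omega
    · intro x _ hx
      simp only [Finset.mem_range] at hx
      rw [Nat.choose_eq_zero_of_lt (by omega)]
      push_cast; ring
  rw [ext, sum_range_two_mul (fun i => (-1 : ℤ) ^ i * (Nat.choose k i : ℤ) * (i : ℤ) ^ m) (k + 1)]
  unfold Evs Xs
  push_cast
  rw [← Finset.sum_sub_distrib]
  refine sum_congr rfl ?_
  intro j _
  have h1 : (-1 : ℤ) ^ (2 * j) = 1 := by rw [pow_mul]; norm_num
  have h2 : (-1 : ℤ) ^ (2 * j + 1) = -1 := by rw [pow_succ, h1, one_mul]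
  rw [pow_mul] at h1 ⊢
  norm_num at h1 ⊢
  rw [h2]
  ring

lemma Evs_dvd {k m : ℕ} (hm1 : 1 ≤ m) (hkm : k ≤ m) : 2 ^ k ∣ Evs k m := by
  refine Finset.dvd_sum ?_
  intro j _
  cases j with
  | zero =>
    rw [show 2*0 = 0 from rfl, Nat.zero_pow (by omega), Nat.mul_zero]
    exact dvd_zero _
  | succ a =>
    refine Dvd.dvd.mul_left ?_ _
    rw [mul_pow]
    exact Dvd.dvd.mul_right (pow_dvd_pow 2 hkm) _

lemma term_dvd (m k m' t ex : ℕ) (hm' : 1 ≤ m') (hm'm : m' ≤ m)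
    (hIH : 1 ≤ t → t ≤ m' → 2 * t < k → 2 ^ (s2 t) ∣ 2 ^ (s2 m') * stirling2 m' t)
    (hextra : 1 ≤ t → t ≤ m' → 2 * t < k → t + 1 + ex ≤ s2 (m - m') + m') :
    2 ^ (k + ex) ∣ 2 ^ (s2 m)
      * (2 ^ m' * Nat.choose m m' * (stirling2 m' t * Nat.factorial t * Lf k t)) := by
  rcases Nat.eq_zero_or_pos t with rfl | ht
  · obtain ⟨a, rfl⟩ : ∃ a, m' = a + 1 := ⟨m' - 1, by omega⟩
    simp
  rcases lt_or_ge m' t with hlt | htm'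
  · rw [stirling2_eq_zero_of_lt hlt]
    simp
  rcases lt_or_ge k (2 * t + 1) with hksm | hkbig
  · rw [Lf_vanish hksm]
    simp
  -- main case
  have h2tk : 2 * t < k := by omega
  obtain ⟨r, rfl⟩ : ∃ r, k = 2 * t + 1 + r := ⟨k - (2 * t + 1), by omega⟩
  rw [Lf_closed t r]
  have hA : 2 ^ (s2 m' + s2 (m - m')) ∣ 2 ^ (s2 m) * Nat.choose m m' := dvd_pow_s2_choose hm'm
  have hB : 2 ^ (s2 t) ∣ 2 ^ (s2 m') * stirling2 m' t := hIH ht htm' h2tk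
  have hC : 2 ^ t ∣ 2 ^ (s2 t) * Nat.factorial t := dvd_pow_s2_factorial t
  have hD := hextra ht htm' h2tk
  -- put together with cancellation of 2^(s2 m' + s2 t)
  have eq1 : 2 ^ (s2 m' + s2 t) * (2 ^ (s2 m)
        * (2 ^ m' * Nat.choose m m' * (stirling2 m' t * Nat.factorial t
            * (2 ^ r * Nat.choose (t + r) t))))
      = (2 ^ (s2 m) * Nat.choose m m') * ((2 ^ (s2 m') * stirling2 m' t)
          * ((2 ^ (s2 t) * Nat.factorial t) * (2 ^ m' * 2 ^ r * Nat.choose (t + r) t))) := by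
    ring
  have dvd1 : 2 ^ (s2 m' + s2 (m - m')) * (2 ^ (s2 t) * (2 ^ t
        * (2 ^ m' * 2 ^ r * Nat.choose (t + r) t)))
      ∣ (2 ^ (s2 m) * Nat.choose m m') * ((2 ^ (s2 m') * stirling2 m' t)
          * ((2 ^ (s2 t) * Nat.factorial t) * (2 ^ m' * 2 ^ r * Nat.choose (t + r) t))) :=
    mul_dvd_mul hA (mul_dvd_mul hB (mul_dvd_mul hC dvd_rfl))
  have dvd2 : 2 ^ (s2 m' + s2 t) * 2 ^ (2 * t + 1 + r + ex)
      ∣ 2 ^ (s2 m' + s2 (m - m')) * (2 ^ (s2 t) * (2 ^ t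
        * (2 ^ m' * 2 ^ r * Nat.choose (t + r) t))) := by
    have hexp : s2 m' + s2 t + (2 * t + 1 + r + ex)
        ≤ s2 m' + s2 (m - m') + (s2 t + (t + (m' + r))) := by omega
    calc 2 ^ (s2 m' + s2 t) * 2 ^ (2 * t + 1 + r + ex)
        = 2 ^ (s2 m' + s2 t + (2 * t + 1 + r + ex)) := by rw [← pow_add]
      _ ∣ 2 ^ (s2 m' + s2 (m - m') + (s2 t + (t + (m' + r)))) := pow_dvd_pow 2 hexp
      _ = 2 ^ (s2 m' + s2 (m - m')) * (2 ^ (s2 t) * (2 ^ t * (2 ^ m' * 2 ^ r))) := by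
          rw [← pow_add, ← pow_add, ← pow_add, ← pow_add]
      _ ∣ 2 ^ (s2 m' + s2 (m - m')) * (2 ^ (s2 t) * (2 ^ t
            * (2 ^ m' * 2 ^ r * Nat.choose (t + r) t))) := by
          exact mul_dvd_mul_left _ (mul_dvd_mul_left _ (mul_dvd_mul_left _ (dvd_mul_right _ _)))
  have final := dvd2.trans dvd1
  rw [← eq1] at final
  exact (Nat.mul_dvd_mul_iff_left (show 0 < 2 ^ (s2 m' + s2 t) by positivity)).mp final

lemma factS_eq (m K : ℕ) :
    (Nat.factorial (K+1) * stirling2 m (K+1) : ℤ) * (-1)^(K+1)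
      = (Evs (K+1) m : ℤ) - 2^K - (Rest (K+1) m : ℤ) := by
  have h1 := Gs_eq m (K+1)
  have h2 := Gs_split m (K+1)
  have h3 := Xs_decomp K m
  have h4 : (Xs (K+1) m : ℤ) = 2^K + (Rest (K+1) m : ℤ) := by
    rw [h3]; push_cast; ring
  have h5 : Gs m (K+1) = (Evs (K+1) m : ℤ) - 2^K - (Rest (K+1) m : ℤ) := by
    rw [h2, h4]; ring
  rw [h1] at h5
  rw [← h5]
  ring

lemma rest_dvd_gen (m K ex : ℕ)
    (hIH2 : ∀ m' t, 1 ≤ m' → m' ≤ m → 1 ≤ t → t ≤ m' → 2 * t < K + 1 →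
      2 ^ (s2 t) ∣ 2 ^ (s2 m') * stirling2 m' t)
    (hextra : ∀ m' t, 1 ≤ m' → m' ≤ m → 1 ≤ t → t ≤ m' → 2 * t < K + 1 →
      t + 1 + ex ≤ s2 (m - m') + m') :
    2 ^ (K + 1 + ex) ∣ 2 ^ (s2 m) * Rest (K + 1) m := by
  unfold Rest
  rw [Finset.mul_sum]
  refine Finset.dvd_sum ?_
  intro a ha
  rw [Finset.mul_sum]
  refine Finset.dvd_sum ?_
  intro t _
  simp only [Finset.mem_range] at ha
  have h := term_dvd m (K+1) (a+1) t ex (by omega) (by omega)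
    (fun h1 h2 h3 => hIH2 (a+1) t (by omega) (by omega) h1 h2 h3)
    (fun h1 h2 h3 => hextra (a+1) t (by omega) (by omega) h1 h2 h3)
  simpa using h

lemma lemmaA : ∀ m k, 2 ^ (s2 k) ∣ 2 ^ (s2 m) * stirling2 m k := by
  intro m
  induction m using Nat.strong_induction_on with
  | _ m ihm =>
  intro k
  induction k using Nat.strong_induction_on with
  | _ k ihk =>
  rcases Nat.eq_zero_or_pos k with rfl | hk
  · rcases Nat.eq_zero_or_pos m with rfl | hm
    · simp
    · obtain ⟨a, rfl⟩ : ∃ a, m = a + 1 := ⟨m - 1, by omega⟩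
      simp
  rcases lt_or_ge m k with hmk | hkm
  · rw [stirling2_eq_zero_of_lt hmk]; simp
  obtain ⟨K, rfl⟩ : ∃ K, k = K + 1 := ⟨k - 1, by omega⟩
  have hm1 : 1 ≤ m := le_trans hk hkm
  have hs2m : 1 ≤ s2 m := s2_pos (by omega)
  -- divisibility of the three pieces
  have dEv : 2 ^ (K + 1) ∣ 2 ^ (s2 m) * Evs (K+1) m :=
    Dvd.dvd.mul_left (Evs_dvd hm1 hkm) _
  have dPow : 2 ^ (K + 1) ∣ 2 ^ (s2 m) * 2 ^ K := by
    rw [← pow_add]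
    exact pow_dvd_pow 2 (by omega)
  have dRest : 2 ^ (K + 1) ∣ 2 ^ (s2 m) * Rest (K+1) m := by
    have h := rest_dvd_gen m K 0
      (fun m' t hm'1 hm'le ht1 htm' h2t => by
        rcases eq_or_lt_of_le hm'le with heq | hlt
        · subst heq
          exact ihk t (by omega)
        · exact ihm m' hlt t)
      (fun m' t hm'1 hm'le ht1 htm' h2t => by
        rcases eq_or_lt_of_le hm'le with heq | hlt
        · rw [heq, Nat.sub_self, s2_zero, Nat.zero_add]
          omega
        · have : 1 ≤ s2 (m - m') := s2_pos (by omega)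
          omega)
    simpa using h
  -- combine in ℤ
  have hZ := factS_eq m K
  have dZ : (2 : ℤ) ^ (K + 1) ∣
      (2 ^ (s2 m) * (Nat.factorial (K+1) * stirling2 m (K+1)) : ℕ) := by
    have e1 : ((2 ^ (s2 m) * (Nat.factorial (K+1) * stirling2 m (K+1)) : ℕ) : ℤ)
        = ((2 ^ (s2 m) : ℕ) : ℤ) * ((Nat.factorial (K+1) * stirling2 m (K+1) : ℤ)) := by
      push_cast; ring
    have e2 : ((2 ^ (s2 m) : ℕ) : ℤ) * ((Nat.factorial (K+1) * stirling2 m (K+1) : ℤ))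
          * (-1 : ℤ)^(K+1) * (-1 : ℤ)^(K+1)
        = ((2 ^ (s2 m) : ℕ) : ℤ) * ((Nat.factorial (K+1) * stirling2 m (K+1) : ℤ)) := by
      have : (-1 : ℤ)^(K+1) * (-1 : ℤ)^(K+1) = 1 := by
        rw [← pow_add]
        exact Even.neg_one_pow ⟨K + 1, by ring⟩
      rw [mul_assoc, this, mul_one]
    rw [e1, ← e2]
    refine Dvd.dvd.mul_right ?_ _
    have : ((2 ^ (s2 m) : ℕ) : ℤ) * (Nat.factorial (K+1) * stirling2 m (K+1) : ℤ)
          * (-1 : ℤ)^(K+1)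
        = ((2 ^ (s2 m) * Evs (K+1) m : ℕ) : ℤ) - ((2 ^ (s2 m) * 2 ^ K : ℕ) : ℤ)
          - ((2 ^ (s2 m) * Rest (K+1) m : ℕ) : ℤ) := by
      rw [mul_assoc, hZ]
      push_cast
      ring
    rw [this]
    have c1 : (2 : ℤ) ^ (K+1) ∣ ((2 ^ (s2 m) * Evs (K+1) m : ℕ) : ℤ) := by
      exact_mod_cast Int.natCast_dvd_natCast.mpr dEv
    have c2 : (2 : ℤ) ^ (K+1) ∣ ((2 ^ (s2 m) * 2 ^ K : ℕ) : ℤ) := by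
      exact_mod_cast Int.natCast_dvd_natCast.mpr dPow
    have c3 : (2 : ℤ) ^ (K+1) ∣ ((2 ^ (s2 m) * Rest (K+1) m : ℕ) : ℤ) := by
      exact_mod_cast Int.natCast_dvd_natCast.mpr dRest
    exact dvd_sub (dvd_sub c1 c2) c3
  have key : 2 ^ (K + 1) ∣ 2 ^ (s2 m) * (Nat.factorial (K+1) * stirling2 m (K+1)) := by
    exact_mod_cast dZ
  -- conclude with valuations
  rcases eq_or_ne (stirling2 m (K+1)) 0 with hS | hS
  · rw [hS]; simp
  have hne : 2 ^ (s2 m) * (Nat.factorial (K+1) * stirling2 m (K+1)) ≠ 0 := by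
    have := Nat.factorial_pos (K+1)
    positivity
  have hval : K + 1 ≤ padicValNat 2 (2 ^ (s2 m) * (Nat.factorial (K+1) * stirling2 m (K+1))) :=
    (padicValNat_dvd_iff_le hne).mp key
  rw [padicValNat.mul (by positivity) (by positivity),
    padicValNat.mul (by positivity) hS, padicValNat.prime_pow] at hval
  have hfact := v2_factorial (K+1)
  have hs2k : s2 (K+1) ≤ K + 1 := s2_le_self (K+1)
  have goalval : s2 (K+1) ≤ s2 m + padicValNat 2 (stirling2 m (K+1)) := by omega
  have hne2 : 2 ^ (s2 m) * stirling2 m (K+1) ≠ 0 := by positivity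
  refine (padicValNat_dvd_iff_le hne2).mpr ?_
  rw [padicValNat.mul (by positivity) hS, padicValNat.prime_pow]
  exact goalval

theorem stmt_15 (n k : ℕ) (hn : 0 < n) (hk : 1 ≤ k) (hk2 : k ≤ 2 ^ n) :
    padicValNat 2 (stirling2 (2 ^ n) k) = s2 k - 1 := by
  obtain ⟨K, rfl⟩ : ∃ K, k = K + 1 := ⟨k - 1, by omega⟩
  have hs2m : s2 (2 ^ n) = 1 := s2_pow_two n
  have hpow : 2 ^ n = 2 * 2 ^ (n - 1) := by
    rw [← pow_succ']
    congr 1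
    omega
  have hhalf : 1 ≤ 2 ^ (n - 1) := Nat.one_le_two_pow
  have hm1 : 1 ≤ 2 ^ n := Nat.one_le_two_pow
  -- the extra inequality in the power-of-two case
  have hextraB : ∀ m' t, 1 ≤ m' → m' ≤ 2 ^ n → 1 ≤ t → t ≤ m' → 2 * t < K + 1 →
      t + 1 + 1 ≤ s2 (2 ^ n - m') + m' := by
    intro m' t hm'1 hm'le ht1 htm' h2t
    have htlt : t < 2 ^ (n - 1) := by omega
    rcases eq_or_lt_of_le hm'le with heq | hlt
    · rw [heq, Nat.sub_self, s2_zero, Nat.zero_add]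
      omega
    · rcases eq_or_lt_of_le htm' with heqt | hltt
      · subst heqt
        -- need s2 (2^n - t) ≥ 2
        by_contra hcon
        push_neg at hcon
        have hx0 : 2 ^ n - t ≠ 0 := by omega
        have hone : s2 (2 ^ n - t) = 1 := by
          have := s2_pos hx0
          omega
        obtain ⟨c, hc⟩ := s2_eq_one_iff hone
        have hclt : 2 ^ c ≤ 2 ^ (n - 1) := by
          refine Nat.pow_le_pow_right (by norm_num) ?_
          by_contra hcn
          push_neg at hcn
          have : 2 ^ n ≤ 2 ^ c := Nat.pow_le_pow_right (by norm_num) (by omega)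
          omega
        omega
      · have : 1 ≤ s2 (2 ^ n - m') := s2_pos (by omega)
        omega
  -- divisibilities
  have dEv : 2 ^ (K + 1) ∣ Evs (K + 1) (2 ^ n) := Evs_dvd hm1 hk2
  have dRest : 2 ^ (K + 2) ∣ 2 * Rest (K + 1) (2 ^ n) := by
    have h := rest_dvd_gen (2 ^ n) K 1
      (fun m' t _ _ _ _ _ => lemmaA m' t) hextraB
    rw [hs2m, pow_one] at h
    simpa using h
  -- the integer identity, doubled
  have hZ := factS_eq (2 ^ n) K
  set Y : ℕ := 2 * (Nat.factorial (K + 1) * stirling2 (2 ^ n) (K + 1)) with hY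
  have hZ2 : (Y : ℤ) * (-1) ^ (K + 1)
      = 2 * (Evs (K + 1) (2 ^ n) : ℤ) - 2 ^ (K + 1) - 2 * (Rest (K + 1) (2 ^ n) : ℤ) := by
    rw [hY]
    push_cast
    have : ((Nat.factorial (K + 1) : ℤ) * (stirling2 (2 ^ n) (K + 1) : ℤ)) * (-1) ^ (K + 1)
        = (Evs (K + 1) (2 ^ n) : ℤ) - 2 ^ K - (Rest (K + 1) (2 ^ n) : ℤ) := by
      exact_mod_cast hZ
    calc 2 * ((Nat.factorial (K + 1) : ℤ) * (stirling2 (2 ^ n) (K + 1) : ℤ)) * (-1) ^ (K + 1)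
        = 2 * (((Nat.factorial (K + 1) : ℤ) * (stirling2 (2 ^ n) (K + 1) : ℤ)) * (-1) ^ (K + 1)) := by
          ring
      _ = 2 * ((Evs (K + 1) (2 ^ n) : ℤ) - 2 ^ K - (Rest (K + 1) (2 ^ n) : ℤ)) := by rw [this]
      _ = 2 * (Evs (K + 1) (2 ^ n) : ℤ) - 2 ^ (K + 1) - 2 * (Rest (K + 1) (2 ^ n) : ℤ) := by
          ring
  have c1 : (2 : ℤ) ^ (K + 2) ∣ 2 * (Evs (K + 1) (2 ^ n) : ℤ) := by
    have : (2 : ℕ) ^ (K + 2) ∣ 2 * Evs (K + 1) (2 ^ n) := by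
      rw [pow_succ, mul_comm]
      exact mul_dvd_mul_left 2 dEv
    exact_mod_cast Int.natCast_dvd_natCast.mpr this
  have c3 : (2 : ℤ) ^ (K + 2) ∣ 2 * (Rest (K + 1) (2 ^ n) : ℤ) := by
    exact_mod_cast Int.natCast_dvd_natCast.mpr dRest
  -- 2^(K+1) divides Y
  have claim1 : 2 ^ (K + 1) ∣ Y := by
    have hz : (2 : ℤ) ^ (K + 1) ∣ (Y : ℤ) * (-1) ^ (K + 1) := by
      rw [hZ2]
      refine dvd_sub (dvd_sub ?_ dvd_rfl) ?_
      · exact (pow_dvd_pow 2 (by omega)).trans c1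
      · exact (pow_dvd_pow 2 (by omega)).trans c3
    have hz2 : (2 : ℤ) ^ (K + 1) ∣ (Y : ℤ) := by
      have := hz.mul_right ((-1 : ℤ) ^ (K + 1))
      have he : (Y : ℤ) * (-1) ^ (K + 1) * (-1) ^ (K + 1) = (Y : ℤ) := by
        rw [mul_assoc, ← pow_add]
        rw [Even.neg_one_pow ⟨K + 1, by ring⟩, mul_one]
      rwa [he] at this
    exact_mod_cast hz2
  -- 2^(K+2) does not divide Y
  have claim2 : ¬ 2 ^ (K + 2) ∣ Y := by
    intro hcon
    have hzc : (2 : ℤ) ^ (K + 2) ∣ (Y : ℤ) := by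
      exact_mod_cast Int.natCast_dvd_natCast.mpr hcon
    have : (2 : ℤ) ^ (K + 2) ∣ (2 : ℤ) ^ (K + 1) := by
      have h1 : (2 : ℤ) ^ (K + 1)
          = 2 * (Evs (K + 1) (2 ^ n) : ℤ) - 2 * (Rest (K + 1) (2 ^ n) : ℤ)
            - (Y : ℤ) * (-1) ^ (K + 1) := by
        rw [hZ2]; ring
      rw [h1]
      exact dvd_sub (dvd_sub c1 c3) (hzc.mul_right _)
    have hnat : (2 : ℕ) ^ (K + 2) ∣ 2 ^ (K + 1) := by exact_mod_cast this
    have hle := Nat.le_of_dvd (by positivity) hnat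
    have h1 : (2:ℕ) ^ (K + 2) = 2 * 2 ^ (K + 1) := by rw [pow_succ, mul_comm]
    have h2 : 0 < (2:ℕ) ^ (K + 1) := by positivity
    omega
  -- conclude
  have hYne : Y ≠ 0 := by
    intro h
    exact claim2 (h ▸ dvd_zero _)
  have hSne : stirling2 (2 ^ n) (K + 1) ≠ 0 := by
    intro h
    rw [hY, h] at hYne
    simp at hYne
  have hpv : padicValNat 2 Y = K + 1 := by
    have hub : K + 1 ≤ padicValNat 2 Y := (padicValNat_dvd_iff_le hYne).mp claim1
    have hlb : ¬ (K + 2 ≤ padicValNat 2 Y) := fun h =>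
      claim2 ((padicValNat_dvd_iff_le hYne).mpr h)
    omega
  rw [hY, padicValNat.mul (by norm_num) (by positivity),
    padicValNat.mul (Nat.factorial_ne_zero _) hSne] at hpv
  have hpv2 : padicValNat 2 2 = 1 := padicValNat.self (by norm_num)
  rw [hpv2] at hpv
  have hfact := v2_factorial (K + 1)
  have hs2k : 1 ≤ s2 (K + 1) := s2_pos (by omega)
  omega
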